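/- Let C ⊂ ℝ^d be a compact convex set with nonempty interior, m ≥ 1 an integer, and φ : C → [0,∞) a function such that φ^{1/m} is concave on C and ∫_C φ(u) du = 1 (integration with respect to d-dimensional Lebesgue measure). Then for every x ∈ C, φ(x) ≤ 2^{m+d} / vol_d(C), where vol_d denotes d-dimensional Lebesgue measure. -/

import Mathlib

open Set MeasureTheory

/-- Bound on the density: if `C ⊂ ℝ^d` is a compact convex set with nonempty interior
and `φ : C → [0,∞)` is `m`-concave (`φ^{1/m}` concave) with `∫_C φ = 1`, then for every
`x ∈ C`, `φ(x) ≤ 2^{m+d}/vol_d(C)`. -/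
theorem density_bound_of_m_concave
    (d m : ℕ) (hm : 1 ≤ m)
    (C : Set (EuclideanSpace ℝ (Fin d)))
    (hC_compact : IsCompact C) (hC_conv : Convex ℝ C)
    (hC_int : (interior C).Nonempty)
    (φ : EuclideanSpace ℝ (Fin d) → ℝ)
    (hφ_nonneg : ∀ u ∈ C, 0 ≤ φ u)
    (hφ_conc : ConcaveOn ℝ C (fun u => φ u ^ ((1 : ℝ) / m)))
    (hφ_int : ∫ u in C, φ u = 1) :
    ∀ x ∈ C, φ x ≤ 2 ^ (m + d) / (volume C).toReal := by
  intro x hx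
  have hmR : (m : ℝ) ≠ 0 := by positivity
  have hνC_pos : 0 < volume C := (isOpen_interior.measure_pos volume hC_int).trans_le (measure_mono interior_subset)
  have hνC_lt : volume C < ⊤ := hC_compact.measure_lt_top
  have hvpos : 0 < (volume C).toReal :=
    ENNReal.toReal_pos hνC_pos.ne' hνC_lt.ne
  have hInt : IntegrableOn φ C := by
    by_contra h
    rw [integral_undef h] at hφ_int
    norm_num at hφ_int
  set f : EuclideanSpace ℝ (Fin d) → EuclideanSpace ℝ (Fin d) :=
    fun u => (2⁻¹ : ℝ) • u + (2⁻¹ : ℝ) • x with hf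
  have hfg : ∀ u, f u = AffineMap.homothety x (2⁻¹ : ℝ) u := by
    intro u
    simp only [hf, AffineMap.homothety_apply, vsub_eq_sub, vadd_eq_add, smul_sub]
    module
  set D : Set (EuclideanSpace ℝ (Fin d)) := f '' C with hD
  have hDC : D ⊆ C := by
    rintro _ ⟨u, hu, rfl⟩
    exact hC_conv hu hx (by norm_num) (by norm_num) (by norm_num)
  -- pointwise lower bound on D
  have hpoint : ∀ v ∈ D, φ x / 2 ^ m ≤ φ v := by
    rintro _ ⟨u, hu, rfl⟩
    have hφx := hφ_nonneg x hx
    have hφu := hφ_nonneg u hu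
    have hψx : (0:ℝ) ≤ φ x ^ ((1 : ℝ) / m) := Real.rpow_nonneg hφx _
    have hψu : (0:ℝ) ≤ φ u ^ ((1 : ℝ) / m) := Real.rpow_nonneg hφu _
    have hconc := hφ_conc.2 hu hx (by norm_num : (0:ℝ) ≤ 2⁻¹)
      (by norm_num : (0:ℝ) ≤ 2⁻¹) (by norm_num)
    have hlow : (2⁻¹ : ℝ) * (φ x ^ ((1 : ℝ) / m)) ≤ φ (f u) ^ ((1 : ℝ) / m) := by
      simp only [smul_eq_mul, hf] at hconc ⊢
      nlinarith
    have hfu : 0 ≤ φ (f u) := hφ_nonneg _ (hDC ⟨u, hu, rfl⟩)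
    have key : ((2⁻¹ : ℝ) * (φ x ^ ((1 : ℝ) / m))) ^ (m : ℝ)
        ≤ (φ (f u) ^ ((1 : ℝ) / m)) ^ (m : ℝ) :=
      Real.rpow_le_rpow (by positivity) hlow (by positivity)
    have e1 : (φ (f u) ^ ((1 : ℝ) / m)) ^ (m : ℝ) = φ (f u) := by
      rw [← Real.rpow_mul hfu, one_div, inv_mul_cancel₀ hmR, Real.rpow_one]
    have e2 : ((2⁻¹ : ℝ) * (φ x ^ ((1 : ℝ) / m))) ^ (m : ℝ)
        = (2⁻¹ : ℝ) ^ (m : ℝ) * φ x := by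
      rw [Real.mul_rpow (by norm_num) hψx, ← Real.rpow_mul hφx, one_div,
        inv_mul_cancel₀ hmR, Real.rpow_one]
    rw [e1, e2] at key
    have h2inv : (2⁻¹ : ℝ) ^ (m : ℝ) = (2 ^ m : ℝ)⁻¹ := by
      rw [Real.rpow_natCast, inv_pow]
    rw [h2inv] at key
    calc φ x / 2 ^ m = (2 ^ m : ℝ)⁻¹ * φ x := by ring
      _ ≤ φ (f u) := key
  -- volume of D
  have hDhom : D = AffineMap.homothety x (2⁻¹ : ℝ) '' C := by
    rw [hD]
    exact Set.image_congr fun u _ => hfg u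
  have hvolD : volume D = ENNReal.ofReal ((2⁻¹ : ℝ) ^ d) * volume C := by
    rw [hDhom, Measure.addHaar_image_homothety, finrank_euclideanSpace_fin,
      abs_of_nonneg (by positivity)]
  have hDcompact : IsCompact D := by
    rw [hDhom]
    exact hC_compact.image (AffineMap.homothety x (2⁻¹ : ℝ)).continuous_of_finiteDimensional
  have hDmeas : MeasurableSet D := hDcompact.measurableSet
  have hDfin : volume D ≠ ⊤ := hDcompact.measure_lt_top.ne
  have hIntD : IntegrableOn φ D := hInt.mono_set hDC
  have h1 : φ x / 2 ^ m * (volume D).toReal ≤ ∫ v in D, φ v :=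
    by
      have := setIntegral_ge_of_const_le hDmeas hDfin hpoint hIntD
      rw [smul_eq_mul, Measure.real] at this
      linarith
  have h2 : (∫ v in D, φ v) ≤ ∫ v in C, φ v :=
    setIntegral_mono_set hInt
      (ae_restrict_of_forall_mem hC_compact.measurableSet hφ_nonneg)
      (HasSubset.Subset.eventuallyLE hDC)
  have hvolD' : (volume D).toReal = (2⁻¹ : ℝ) ^ d * (volume C).toReal := by
    rw [hvolD, ENNReal.toReal_mul, ENNReal.toReal_ofReal (by positivity)]
  rw [hφ_int] at h2
  rw [hvolD'] at h1
  have h3 : φ x / 2 ^ m * ((2⁻¹ : ℝ) ^ d * (volume C).toReal) ≤ 1 := le_trans h1 h2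
  rw [le_div_iff₀ hvpos, pow_add]
  have h2m : (0:ℝ) < 2 ^ m := by positivity
  have h2d : (0:ℝ) < 2 ^ d := by positivity
  calc φ x * (volume C).toReal
      = (φ x / 2 ^ m * ((2⁻¹ : ℝ) ^ d * (volume C).toReal)) * (2 ^ m * 2 ^ d) := by
        field_simp
        rw [mul_assoc, ← mul_pow]; norm_num
    _ ≤ 1 * (2 ^ m * 2 ^ d) :=
        mul_le_mul_of_nonneg_right h3 (by positivity)
    _ = 2 ^ m * 2 ^ d := one_mul _
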